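/- arXiv:0705.3386 — 2 statements merged into one kernel-verified Lean document; each statement's English description precedes it below -/
import Mathlib

section
/- Let X be a metric space, f : X → X an isometry, d ≥ 0, and suppose there exists a point p ∈ X with dist(p, f^n(p)) = n·d for every natural number n. Then dist(x, f(x)) ≥ d for every x ∈ X. -/
/-- If an isometry `f` admits a point `p` with `dist p (f^[n] p) = n * d` for all `n`,
then every point is displaced by at least `d`. -/
theorem stmt_1 {X : Type*} [MetricSpace X] (f : X → X) (hf : Isometry f)
    (d : ℝ) (hd : 0 ≤ d) (p : X) (hp : ∀ n : ℕ, dist p (f^[n] p) = n * d) :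
    ∀ x : X, d ≤ dist x (f x) := by
  intro x
  have hfn : ∀ n : ℕ, Isometry (f^[n]) := by
    intro n
    induction n with
    | zero => simpa using isometry_id
    | succ n ih => rw [Function.iterate_succ]; exact ih.comp hf
  -- upper bound on iterate displacement
  have hub : ∀ n : ℕ, dist x (f^[n] x) ≤ n * dist x (f x) := by
    intro n
    induction n with
    | zero => simp
    | succ n ih =>
      have h1 : dist x (f^[n+1] x) ≤ dist x (f x) + dist (f x) (f^[n+1] x) :=
        dist_triangle _ _ _
      have h2 : dist (f x) (f^[n+1] x) = dist x (f^[n] x) := by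
        rw [Function.iterate_succ_apply']; exact hf.dist_eq _ _
      push_cast
      nlinarith [dist_nonneg (x := x) (y := f x)]
  -- lower bound
  have hlb : ∀ n : ℕ, (n : ℝ) * d - 2 * dist p x ≤ dist x (f^[n] x) := by
    intro n
    have h1 : dist p (f^[n] p) ≤ dist p x + dist x (f^[n] x) + dist (f^[n] x) (f^[n] p) := by
      calc dist p (f^[n] p) ≤ dist p (f^[n] x) + dist (f^[n] x) (f^[n] p) := dist_triangle _ _ _
        _ ≤ dist p x + dist x (f^[n] x) + dist (f^[n] x) (f^[n] p) := by
            linarith [dist_triangle p x (f^[n] x)]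
    have h2 : dist (f^[n] x) (f^[n] p) = dist x p := ((hfn n)).dist_eq _ _
    rw [hp n] at h1
    rw [h2, dist_comm x p] at h1
    linarith
  -- combine: for all n, n * d ≤ n * dist x (f x) + 2 * dist p x
  by_contra h
  push_neg at h
  have hpos : 0 < d - dist x (f x) := by linarith
  obtain ⟨n, hn⟩ := exists_nat_gt (2 * dist p x / (d - dist x (f x)))
  have := (hlb n).trans (hub n)
  have hn' : 2 * dist p x < n * (d - dist x (f x)) := by
    rw [div_lt_iff₀ hpos] at hn
    linarith
  nlinarith
end

section
/- Consider ℓ²(ℤ) with the Hilbert space metric, the shift operator σ defined on the standard orthonormal basis by σ(e_k) = e_{k+1}, and the affine isometry f : ℓ²(ℤ) → ℓ²(ℤ) given by f(u) = e_0 + σ(u). Then f has no fixed point, and inf_{u ∈ ℓ²(ℤ)} ‖f(u) − u‖ = 0. -/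
set_option maxHeartbeats 1000000

open scoped ENNReal RealInnerProductSpace

noncomputable def ee (k : ℤ) : lp (fun _ : ℤ => ℝ) 2 := lp.single 2 k (1:ℝ)

lemma ee_inner (v : lp (fun _ : ℤ => ℝ) 2) (k : ℤ) : ⟪ee k, v⟫ = v k := by
  rw [ee, lp.inner_single_left]; simp

lemma ee_orth : Orthonormal ℝ ee := by
  rw [orthonormal_iff_ite]
  intro i j
  rw [ee_inner]
  by_cases h : i = j
  · simp [ee, h, lp.single_apply_self]
  · rw [ee, lp.single_apply_ne 2 j _ h]; simp [h]

lemma sigma_apply (σ : lp (fun _ : ℤ => ℝ) 2 ≃ₗᵢ[ℝ] lp (fun _ : ℤ => ℝ) 2)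
    (hσ : ∀ k : ℤ, σ (lp.single 2 k (1:ℝ)) = lp.single 2 (k+1) (1:ℝ))
    (u : lp (fun _ : ℤ => ℝ) 2) (k : ℤ) : (σ u : ∀ _ : ℤ, ℝ) k = u (k - 1) := by
  have h2 : ee k = σ (ee (k-1)) := by rw [ee, ee, hσ]; ring_nf
  rw [← ee_inner (σ u) k, h2, σ.inner_map_map, ee_inner]

/-- On `ℓ²(ℤ)`, if `σ` is the shift isometry (`σ e_k = e_{k+1}`), then the affine
isometry `f u = e₀ + σ u` has no fixed point, while its displacement infimum is `0`
(`f` is parabolic). -/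
theorem stmt_12 (σ : lp (fun _ : ℤ => ℝ) 2 ≃ₗᵢ[ℝ] lp (fun _ : ℤ => ℝ) 2)
    (hσ : ∀ k : ℤ, σ (lp.single 2 k (1 : ℝ)) = lp.single 2 (k + 1) (1 : ℝ)) :
    (∀ u : lp (fun _ : ℤ => ℝ) 2, lp.single 2 (0 : ℤ) (1 : ℝ) + σ u ≠ u) ∧
    (⨅ u : lp (fun _ : ℤ => ℝ) 2, ‖lp.single 2 (0 : ℤ) (1 : ℝ) + σ u - u‖) = 0 := by
  constructor
  · -- no fixed point
    intro u h
    have hco : ∀ k : ℤ, (lp.single 2 (0:ℤ) (1:ℝ) : ∀ _ : ℤ, ℝ) k + (σ u : ∀ _ : ℤ, ℝ) k = u k := by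
      intro k
      conv_rhs => rw [← h]
      rw [lp.coeFn_add]; rfl
    have hrec : ∀ k : ℤ, k ≠ 0 → (u : ∀ _ : ℤ, ℝ) k = u (k - 1) := by
      intro k hk
      have := hco k
      rw [lp.single_apply_ne 2 0 _ hk, sigma_apply σ hσ] at this
      linarith
    have h0 : (u : ∀ _ : ℤ, ℝ) 0 = 1 + u (-1) := by
      have := hco 0
      rw [lp.single_apply_self, sigma_apply σ hσ, show (0:ℤ)-1 = -1 by ring] at this
      linarith
    have hneg : ∀ n : ℕ, (u : ∀ _ : ℤ, ℝ) (-1 - n) = u (-1) := by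
      intro n
      induction n with
      | zero => simp
      | succ m ih =>
        rw [← ih]
        have := hrec (-1 - m) (by omega)
        rw [this]
        congr 1
        push_cast
        ring
    have hpos : ∀ n : ℕ, (u : ∀ _ : ℤ, ℝ) n = 1 + u (-1) := by
      intro n
      induction n with
      | zero => exact_mod_cast h0
      | succ m ih =>
        rw [← ih]
        have := hrec (m + 1) (by omega)
        rw [show ((m : ℕ) + 1 : ℤ) - 1 = (m : ℤ) by ring] at this
        exact_mod_cast this
    have hsum : Summable (fun k : ℤ => ‖(u : ∀ _ : ℤ, ℝ) k‖ ^ (2:ℝ)) := by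
      have := (lp.memℓp u).summable (p := 2) (by norm_num)
      simpa using this
    have hm1 : (u : ∀ _ : ℤ, ℝ) (-1) = 0 := by
      by_contra hne
      have hinj : Function.Injective (fun n : ℕ => (-1 - n : ℤ)) := by
        intro a b hab; simpa using hab
      have hs2 := hsum.comp_injective hinj
      have : Summable (fun _ : ℕ => ‖(u : ∀ _ : ℤ, ℝ) (-1)‖ ^ (2:ℝ)) := by
        refine hs2.congr ?_
        intro n
        simp [Function.comp, hneg n]
      have hfin := Set.Finite.of_summable_const (Real.rpow_pos_of_pos (norm_pos_iff.mpr hne) _) this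
      exact Set.infinite_univ hfin
    have hinj : Function.Injective (fun n : ℕ => (n : ℤ)) := fun a b hab => by simpa using hab
    have hs2 := hsum.comp_injective hinj
    have : Summable (fun _ : ℕ => (1:ℝ)) := by
      refine hs2.congr ?_
      intro n
      simp [Function.comp, hpos n, hm1]
    have hfin := Set.Finite.of_summable_const (by positivity) this
    exact Set.infinite_univ hfin
  · -- infimum is zero
    have key : ∀ k : ℕ, 0 < k → ∃ v : lp (fun _ : ℤ => ℝ) 2,
        ‖lp.single 2 (0:ℤ) (1:ℝ) + σ v - v‖ = Real.sqrt (k : ℝ)⁻¹ := by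
      intro k hk
      set c : ℕ → ℝ := fun n => 1 - n / k with hc
      refine ⟨∑ n ∈ Finset.range (k+1), c n • ee n, ?_⟩
      set w : lp (fun _ : ℤ => ℝ) 2 := ∑ n ∈ Finset.range k, (k:ℝ)⁻¹ • ee ((n:ℤ)+1) with hw
      have hσv : σ (∑ n ∈ Finset.range (k+1), c n • ee n)
          = ∑ n ∈ Finset.range (k+1), c n • ee ((n:ℤ)+1) := by
        rw [map_sum]
        refine Finset.sum_congr rfl fun n _ => ?_
        rw [map_smul, ee, hσ, ee]
      have hkR : (k:ℝ) ≠ 0 := by positivity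
      have hid : lp.single 2 (0:ℤ) (1:ℝ) + σ (∑ n ∈ Finset.range (k+1), c n • ee n)
          - ∑ n ∈ Finset.range (k+1), c n • ee n = w := by
        rw [hσv, Finset.sum_range_succ (f := fun n => c n • ee ((n:ℤ)+1)),
          Finset.sum_range_succ' (f := fun n => c n • ee (n:ℤ))]
        have hck : c k = 0 := by rw [hc]; simp [hkR]
        have hc0 : c 0 = 1 := by simp [hc]
        rw [hck, hc0, zero_smul, add_zero, one_smul]
        have : lp.single 2 (0:ℤ) (1:ℝ) = ee (0:ℤ) := rfl
        rw [this]
        push_cast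
        rw [hw]
        have hAB : ee 0 + ∑ x ∈ Finset.range k, c x • ee ((x:ℤ)+1)
            - (∑ x ∈ Finset.range k, c (x+1) • ee ((x:ℤ)+1) + ee 0)
            = ∑ x ∈ Finset.range k, (c x • ee ((x:ℤ)+1) - c (x+1) • ee ((x:ℤ)+1)) := by
          rw [Finset.sum_sub_distrib]
          abel
        rw [hAB]
        have : ∀ n ∈ Finset.range k, c n • ee ((n:ℤ)+1) - c (n+1) • ee ((n:ℤ)+1)
            = (k:ℝ)⁻¹ • ee ((n:ℤ)+1) := by
          intro n _
          rw [← sub_smul]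
          congr 1
          rw [hc]
          push_cast
          field_simp
          ring
        rw [Finset.sum_congr rfl this]
      rw [hid]
      -- compute norm of w
      have hinj : Function.Injective (fun n : ℕ => ((n:ℤ)+1)) := by
        intro a b hab; simpa using hab
      have horth : Orthonormal ℝ (fun n : ℕ => ee ((n:ℤ)+1)) := ee_orth.comp _ hinj
      have hnormsq : ‖w‖ ^ 2 = (k:ℝ)⁻¹ := by
        rw [← real_inner_self_eq_norm_sq, hw]
        rw [sum_inner]
        have : ∀ n ∈ Finset.range k,
            ⟪(k:ℝ)⁻¹ • ee ((n:ℤ)+1), ∑ m ∈ Finset.range k, (k:ℝ)⁻¹ • ee ((m:ℤ)+1)⟫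
            = (k:ℝ)⁻¹ * (k:ℝ)⁻¹ := by
          intro n hn
          rw [real_inner_smul_left]
          congr 1
          exact horth.inner_right_sum (fun _ => (k:ℝ)⁻¹) hn
        rw [Finset.sum_congr rfl this, Finset.sum_const, Finset.card_range, nsmul_eq_mul]
        field_simp
      have h0 : (0:ℝ) ≤ ‖w‖ := norm_nonneg _
      rw [← hnormsq, Real.sqrt_sq h0]
    refine le_antisymm ?_ (le_ciInf fun u => norm_nonneg _)
    have hbdd : BddBelow (Set.range fun u : lp (fun _ : ℤ => ℝ) 2 =>
        ‖lp.single 2 (0:ℤ) (1:ℝ) + σ u - u‖) := ⟨0, by rintro x ⟨u, rfl⟩; exact norm_nonneg _⟩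
    refine le_of_forall_pos_le_add fun ε hε => ?_
    obtain ⟨k, hk, hlt⟩ : ∃ k : ℕ, 0 < k ∧ Real.sqrt (k:ℝ)⁻¹ < ε := by
      obtain ⟨k, hk⟩ := exists_nat_gt (ε⁻¹ ^ 2)
      refine ⟨k + 1, Nat.succ_pos _, ?_⟩
      have hk1 : ε⁻¹ ^ 2 < (k + 1 : ℝ) := by push_cast; linarith
      have hpos : (0:ℝ) < (k + 1 : ℝ) := by positivity
      rw [show ((k+1 : ℕ) : ℝ) = (k + 1 : ℝ) by push_cast; ring]
      rw [Real.sqrt_lt' hε]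
      rw [inv_lt_comm₀ hpos (by positivity)]
      calc (ε ^ 2)⁻¹ = ε⁻¹ ^ 2 := by rw [inv_pow]
        _ < (k + 1 : ℝ) := hk1
    obtain ⟨v, hv⟩ := key k hk
    have h1 : (⨅ u : lp (fun _ : ℤ => ℝ) 2, ‖lp.single 2 (0 : ℤ) (1 : ℝ) + σ u - u‖)
        ≤ ‖lp.single 2 (0:ℤ) (1:ℝ) + σ v - v‖ := ciInf_le hbdd v
    rw [hv] at h1
    rw [zero_add]
    exact h1.trans hlt.le
end
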